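/- Let D₊, D₋ > 0, λ > 0, α = 1/√D₋ + 1/√D₊, Erfc(x) = (2/√π)∫_x^∞ e^{−u²} du, and G₋₊(s,s₁,t) = (λ/√(D₋D₊))·exp((λα/√D₋)(−s + s₁√(D₋/D₊)) + λ²α²t)·Erfc((−s + s₁√(D₋/D₊))/(2√(D₋t)) + λα√t). Then the total heat transmitted through a flat interface of resistance λ is linear in t to leading order: lim_{t→0⁺} (1/t) · ∫_{−∞}^0 ∫_0^∞ G₋₊(s, s₁, t) ds₁ ds = λ. -/

import Mathlib

open MeasureTheory Set Filter
open Real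


noncomputable def myErfc (x : ℝ) : ℝ :=
  (2 / Real.sqrt Real.pi) * ∫ u in Set.Ioi x, Real.exp (-u ^ 2)

lemma gauss_integrable : Integrable (fun u : ℝ => Real.exp (-u ^ 2)) := by
  simpa using integrable_exp_neg_mul_sq (one_pos)

lemma gauss_cont : Continuous (fun u : ℝ => Real.exp (-u ^ 2)) := by
  continuity

lemma gauss_shift_integrable (c : ℝ) :
    Integrable (fun u : ℝ => Real.exp (-(u + c) ^ 2)) := by
  have A : MeasurableEmbedding fun x : ℝ => x + c :=
    (Homeomorph.addRight c).measurableEmbedding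
  have hf := gauss_integrable
  rw [← map_add_right_eq_self volume c] at hf
  exact (A.integrable_map_iff).mp hf

lemma integral_comp_add_right_Ioi (f : ℝ → ℝ) (a c : ℝ) :
    ∫ x in Ioi a, f (x + c) = ∫ x in Ioi (a + c), f x := by
  have A : MeasurableEmbedding fun x : ℝ => x + c :=
    (Homeomorph.addRight c).measurableEmbedding
  have h := A.setIntegral_map (μ := volume) f (Ioi (a + c))
  rw [map_add_right_eq_self volume c] at h
  rw [h]
  congr 1
  ext x
  simp [lt_sub_iff_add_lt]

lemma integral_comp_affine_Ioi (f : ℝ → ℝ) {B : ℝ} (hB : 0 < B) (C a : ℝ) :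
    ∫ x in Ioi a, f (B * x + C) = B⁻¹ * ∫ y in Ioi (B * a + C), f y := by
  have h1 := integral_comp_mul_left_Ioi (fun y => f (y + C)) a hB
  rw [h1, integral_comp_add_right_Ioi, smul_eq_mul]

lemma myErfc_nonneg (x : ℝ) : 0 ≤ myErfc x := by
  apply mul_nonneg
  · positivity
  · exact setIntegral_nonneg measurableSet_Ioi (fun u _ => (Real.exp_pos _).le)

lemma myErfc_zero : myErfc 0 = 1 := by
  unfold myErfc
  have h : ∫ u in Ioi (0:ℝ), Real.exp (-u ^ 2) = Real.sqrt Real.pi / 2 := by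
    simpa using integral_gaussian_Ioi 1
  rw [h]
  have : Real.sqrt Real.pi ≠ 0 := by positivity
  field_simp

lemma myErfc_antitone : Antitone myErfc := by
  intro x y hxy
  unfold myErfc
  apply mul_le_mul_of_nonneg_left _ (by positivity)
  apply setIntegral_mono_set gauss_integrable.integrableOn
  · exact Eventually.of_forall (fun u => (Real.exp_pos _).le)
  · exact HasSubset.Subset.eventuallyLE (Ioi_subset_Ioi hxy)

lemma myErfc_le_one {x : ℝ} (hx : 0 ≤ x) : myErfc x ≤ 1 := by
  simpa [myErfc_zero] using myErfc_antitone hx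

lemma myErfc_le_gauss {x : ℝ} (hx : 0 ≤ x) : myErfc x ≤ Real.exp (-x ^ 2) := by
  unfold myErfc
  have key : ∫ u in Ioi x, Real.exp (-u ^ 2)
      ≤ Real.exp (-x ^ 2) * (Real.sqrt Real.pi / 2) := by
    have h1 : ∫ u in Ioi x, Real.exp (-u ^ 2)
        ≤ ∫ u in Ioi x, Real.exp (-x ^ 2) * Real.exp (-(u + -x) ^ 2) := by
      apply setIntegral_mono_on gauss_integrable.integrableOn
        ((gauss_shift_integrable (-x)).const_mul _).integrableOn measurableSet_Ioi
      intro u hu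
      rw [← Real.exp_add]
      apply Real.exp_le_exp.2
      nlinarith [mem_Ioi.1 hu]
    have h2 : ∫ u in Ioi x, Real.exp (-x ^ 2) * Real.exp (-(u + -x) ^ 2)
        = Real.exp (-x ^ 2) * ∫ u in Ioi x, Real.exp (-(u + -x) ^ 2) := by
      rw [integral_const_mul]
    have h3 : ∫ u in Ioi x, Real.exp (-(u + -x) ^ 2)
        = ∫ u in Ioi (0:ℝ), Real.exp (-u ^ 2) := by
      have := integral_comp_add_right_Ioi (fun u => Real.exp (-u ^ 2)) x (-x)
      simpa using this
    have h4 : ∫ u in Ioi (0:ℝ), Real.exp (-u ^ 2) = Real.sqrt Real.pi / 2 := by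
      simpa using integral_gaussian_Ioi 1
    calc ∫ u in Ioi x, Real.exp (-u ^ 2) ≤ _ := h1
      _ = _ := h2
      _ = Real.exp (-x ^ 2) * (Real.sqrt Real.pi / 2) := by rw [h3, h4]
  have hπ : (0:ℝ) < Real.sqrt Real.pi := Real.sqrt_pos.2 Real.pi_pos
  calc (2 / Real.sqrt Real.pi) * ∫ u in Ioi x, Real.exp (-u ^ 2)
      ≤ (2 / Real.sqrt Real.pi) * (Real.exp (-x ^ 2) * (Real.sqrt Real.pi / 2)) := by
        apply mul_le_mul_of_nonneg_left key (by positivity)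
    _ = Real.exp (-x ^ 2) := by field_simp

lemma myErfc_eq_sub (x : ℝ) :
    myErfc x = (2 / Real.sqrt Real.pi) *
      ((∫ u in Ioi (0:ℝ), Real.exp (-u ^ 2)) - ∫ u in (0:ℝ)..x, Real.exp (-u ^ 2)) := by
  unfold myErfc
  congr 1
  have h1 : (∫ u in Iic x, Real.exp (-u ^ 2)) + ∫ u in Ioi x, Real.exp (-u ^ 2)
      = ∫ u : ℝ, Real.exp (-u ^ 2) := by
    have := integral_add_compl (measurableSet_Iic (a := x)) gauss_integrable
    simpa using this
  have h0 : (∫ u in Iic (0:ℝ), Real.exp (-u ^ 2)) + ∫ u in Ioi (0:ℝ), Real.exp (-u ^ 2)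
      = ∫ u : ℝ, Real.exp (-u ^ 2) := by
    have := integral_add_compl (measurableSet_Iic (a := (0:ℝ))) gauss_integrable
    simpa using this
  have h2 : (∫ u in Iic x, Real.exp (-u ^ 2)) - ∫ u in Iic (0:ℝ), Real.exp (-u ^ 2)
      = ∫ u in (0:ℝ)..x, Real.exp (-u ^ 2) :=
    intervalIntegral.integral_Iic_sub_Iic gauss_integrable.integrableOn gauss_integrable.integrableOn
  linarith

lemma myErfc_hasDerivAt (x : ℝ) :
    HasDerivAt myErfc (-((2 / Real.sqrt Real.pi) * Real.exp (-x ^ 2))) x := by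
  have hF : HasDerivAt (fun y => ∫ u in (0:ℝ)..y, Real.exp (-u ^ 2))
      (Real.exp (-x ^ 2)) x := by
    apply intervalIntegral.integral_hasDerivAt_right
      (gauss_integrable.intervalIntegrable)
      (gauss_cont.stronglyMeasurable.stronglyMeasurableAtFilter)
      gauss_cont.continuousAt
  have h : HasDerivAt (fun y => (2 / Real.sqrt Real.pi) *
      ((∫ u in Ioi (0:ℝ), Real.exp (-u ^ 2)) - ∫ u in (0:ℝ)..y, Real.exp (-u ^ 2)))
      (-((2 / Real.sqrt Real.pi) * Real.exp (-x ^ 2))) x := by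
    have := ((hF.const_sub (∫ u in Ioi (0:ℝ), Real.exp (-u ^ 2))).const_mul
      (2 / Real.sqrt Real.pi))
    refine this.congr_deriv ?_
    ring
  exact h.congr_of_eventuallyEq (Eventually.of_forall (fun y => (myErfc_eq_sub y)))

lemma myErfc_continuous : Continuous myErfc :=
  continuous_iff_continuousAt.2 (fun x => (myErfc_hasDerivAt x).continuousAt)

lemma exp_mul_myErfc_le (d : ℝ) {z : ℝ} (hz : 0 ≤ z) :
    Real.exp (2 * d * z) * myErfc z ≤ Real.exp (d ^ 2) * Real.exp (-(z + -d) ^ 2) := by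
  calc Real.exp (2 * d * z) * myErfc z
      ≤ Real.exp (2 * d * z) * Real.exp (-z ^ 2) :=
        mul_le_mul_of_nonneg_left (myErfc_le_gauss hz) (Real.exp_pos _).le
    _ = Real.exp (d ^ 2) * Real.exp (-(z + -d) ^ 2) := by
        rw [← Real.exp_add, ← Real.exp_add]; ring_nf

lemma integrableOn_exp_mul_myErfc (d : ℝ) {m : ℝ} (hm : 0 ≤ m) :
    IntegrableOn (fun z => Real.exp (2 * d * z) * myErfc z) (Ioi m) := by
  have hg : IntegrableOn (fun z : ℝ => Real.exp (d ^ 2) * Real.exp (-(z + -d) ^ 2)) (Ioi m) :=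
    ((gauss_shift_integrable (-d)).const_mul _).integrableOn
  have hc : Continuous fun z : ℝ => Real.exp (2 * d * z) * myErfc z :=
    (Real.continuous_exp.comp (by continuity)).mul myErfc_continuous
  apply hg.mono' hc.aestronglyMeasurable
  rw [ae_restrict_iff' measurableSet_Ioi]
  apply Eventually.of_forall
  intro z hz
  have hz0 : 0 ≤ z := le_of_lt (hm.trans_lt (mem_Ioi.1 hz))
  rw [Real.norm_eq_abs, abs_of_nonneg (mul_nonneg (Real.exp_pos _).le (myErfc_nonneg _))]
  exact exp_mul_myErfc_le d hz0

lemma tendsto_exp_mul_myErfc (d : ℝ) :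
    Tendsto (fun z => Real.exp (2 * d * z) * myErfc z) atTop (nhds 0) := by
  have hg : Tendsto (fun z : ℝ => Real.exp (d ^ 2) * Real.exp (-(z + -d) ^ 2)) atTop (nhds 0) := by
    have h1 : Tendsto (fun z : ℝ => -(z + -d) ^ 2) atTop atBot := by
      apply tendsto_neg_atBot_iff.2
      exact (tendsto_atTop_add_const_right atTop (-d) tendsto_id).atTop_mul_atTop₀
        (tendsto_atTop_add_const_right atTop (-d) tendsto_id) |>.congr (by intro x; simp only [id_eq]; ring)
    have := (Real.tendsto_exp_atBot.comp h1).const_mul (Real.exp (d ^ 2))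
    simpa using this
  apply tendsto_of_tendsto_of_tendsto_of_le_of_le' tendsto_const_nhds hg
  · filter_upwards [eventually_ge_atTop (0:ℝ)] with z hz
    exact mul_nonneg (Real.exp_pos _).le (myErfc_nonneg _)
  · filter_upwards [eventually_ge_atTop (0:ℝ)] with z hz
    exact exp_mul_myErfc_le d hz

lemma tendsto_myErfc : Tendsto myErfc atTop (nhds 0) := by
  have := tendsto_exp_mul_myErfc 0
  simpa using this

lemma expErfc_hasDerivAt (d z : ℝ) :
    HasDerivAt (fun z => Real.exp (2 * d * z) * myErfc z -
        Real.exp (d ^ 2) * myErfc (z - d))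
      ((2 * d) * (Real.exp (2 * d * z) * myErfc z)) z := by
  have h1 : HasDerivAt (fun z : ℝ => Real.exp (2 * d * z)) (Real.exp (2 * d * z) * (2 * d)) z := by
    simpa using ((hasDerivAt_id z).const_mul (2 * d)).exp
  have h3 := h1.mul (myErfc_hasDerivAt z)
  have h4 : HasDerivAt (fun z => myErfc (z - d))
      (-(2 / Real.sqrt Real.pi * Real.exp (-(z - d) ^ 2))) z := by
    have := (myErfc_hasDerivAt (z - d)).comp z ((hasDerivAt_id z).sub_const d)
    simpa [Function.comp_def] using this
  have h5 := h3.sub (h4.const_mul (Real.exp (d ^ 2)))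
  refine h5.congr_deriv ?_
  have hid : Real.exp (d ^ 2) * Real.exp (-(z - d) ^ 2)
      = Real.exp (2 * d * z) * Real.exp (-z ^ 2) := by
    rw [← Real.exp_add, ← Real.exp_add]; ring_nf
  have hπ : Real.sqrt Real.pi ≠ 0 := by positivity
  field_simp
  linarith [hid]

lemma Qlem {d : ℝ} (hd : 0 < d) {m : ℝ} (hm : 0 ≤ m) :
    ∫ z in Ioi m, Real.exp (2 * d * z) * myErfc z
      = (2 * d)⁻¹ * (Real.exp (d ^ 2) * myErfc (m - d)
        - Real.exp (2 * d * m) * myErfc m) := by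
  set F : ℝ → ℝ := fun z => (2 * d)⁻¹ * (Real.exp (2 * d * z) * myErfc z -
      Real.exp (d ^ 2) * myErfc (z - d)) with hF
  have hderiv : ∀ z ∈ Ici m, HasDerivAt F (Real.exp (2 * d * z) * myErfc z) z := by
    intro z _
    have := (expErfc_hasDerivAt d z).const_mul (2 * d)⁻¹
    refine this.congr_deriv ?_
    field_simp
  have htend : Tendsto F atTop (nhds 0) := by
    have h1 := tendsto_exp_mul_myErfc d
    have h2 : Tendsto (fun z => Real.exp (d ^ 2) * myErfc (z - d)) atTop (nhds 0) := by
      have := (tendsto_myErfc.comp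
        (tendsto_atTop_add_const_right atTop (-d) tendsto_id)).const_mul (Real.exp (d ^ 2))
      simpa [sub_eq_add_neg, Function.comp] using this
    have h3 := (h1.sub h2).const_mul (2 * d)⁻¹
    rw [sub_zero, mul_zero] at h3
    exact h3
  have := integral_Ioi_of_hasDerivAt_of_tendsto' hderiv
    (integrableOn_exp_mul_myErfc d hm) htend
  rw [this, hF]
  ring

lemma integrableOn_myErfc : IntegrableOn myErfc (Ioi (0:ℝ)) := by
  have := integrableOn_exp_mul_myErfc 0 (le_refl (0:ℝ))
  simpa using this

lemma tendsto_mul_myErfc : Tendsto (fun w => w * myErfc w) atTop (nhds 0) := by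
  have hg : Tendsto (fun w : ℝ => Real.exp (1 - w)) atTop (nhds 0) := by
    apply Real.tendsto_exp_atBot.comp
    have := tendsto_atBot_add_const_left atTop (1:ℝ) tendsto_neg_atTop_atBot
    exact this.congr (fun w => by ring)
  apply tendsto_of_tendsto_of_tendsto_of_le_of_le' tendsto_const_nhds hg
  · filter_upwards [eventually_ge_atTop (0:ℝ)] with w hw
    exact mul_nonneg hw (myErfc_nonneg _)
  · filter_upwards [eventually_ge_atTop (0:ℝ)] with w hw
    have h1 : w * myErfc w ≤ Real.exp w * Real.exp (-w ^ 2) := by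
      apply mul_le_mul (by linarith [Real.add_one_le_exp w]) (myErfc_le_gauss hw)
        (myErfc_nonneg _) (Real.exp_pos _).le
    calc w * myErfc w ≤ Real.exp w * Real.exp (-w ^ 2) := h1
      _ = Real.exp (w - w ^ 2) := by rw [← Real.exp_add]; ring_nf
      _ ≤ Real.exp (1 - w) := by apply Real.exp_le_exp.2; nlinarith [sq_nonneg (w - 1)]

lemma intErfc : ∫ z in Ioi (0:ℝ), myErfc z = 1 / Real.sqrt Real.pi := by
  set F : ℝ → ℝ := fun w => w * myErfc w - Real.exp (-w ^ 2) / Real.sqrt Real.pi with hF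
  have hderiv : ∀ w ∈ Ici (0:ℝ), HasDerivAt F (myErfc w) w := by
    intro w _
    have h1 : HasDerivAt (fun w : ℝ => w * myErfc w)
        (1 * myErfc w + w * -(2 / Real.sqrt Real.pi * Real.exp (-w ^ 2))) w :=
      (hasDerivAt_id w).mul (myErfc_hasDerivAt w)
    have h2 : HasDerivAt (fun w : ℝ => Real.exp (-w ^ 2) / Real.sqrt Real.pi)
        ((Real.exp (-w ^ 2) * (-(2 * w))) / Real.sqrt Real.pi) w := by
      apply HasDerivAt.div_const
      have : HasDerivAt (fun w : ℝ => -w ^ 2) (-(2 * w)) w := by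
        simpa [Pi.neg_def] using ((hasDerivAt_pow 2 w).neg)
      exact this.exp
    have h3 := h1.sub h2
    refine h3.congr_deriv ?_
    have hπ : Real.sqrt Real.pi ≠ 0 := by positivity
    field_simp
    ring
  have htend : Tendsto F atTop (nhds 0) := by
    have hexp : Tendsto (fun w : ℝ => Real.exp (-w ^ 2)) atTop (nhds 0) := by
      apply Real.tendsto_exp_atBot.comp
      have h : Tendsto (fun w : ℝ => w ^ 2) atTop atTop := by
        simpa [pow_two] using tendsto_id.atTop_mul_atTop₀ (tendsto_id (α := ℝ) (x := atTop))
      simpa using h.neg_atBot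
    have h2 := hexp.div_const (Real.sqrt Real.pi)
    rw [zero_div] at h2
    have h3 := tendsto_mul_myErfc.sub h2
    rw [sub_zero] at h3
    exact h3
  have := integral_Ioi_of_hasDerivAt_of_tendsto' hderiv integrableOn_myErfc htend
  rw [this, hF]
  simp [myErfc_zero]

noncomputable def Nf (x : ℝ) : ℝ :=
  Real.exp (x ^ 2) * myErfc x - 1 + 2 * x / Real.sqrt Real.pi

lemma Nf_hasDerivAt (x : ℝ) :
    HasDerivAt Nf (2 * x * Real.exp (x ^ 2) * myErfc x) x := by
  have h1 : HasDerivAt (fun x : ℝ => Real.exp (x ^ 2)) (Real.exp (x ^ 2) * (2 * x)) x := by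
    have := (hasDerivAt_pow 2 x).exp
    simpa using this
  have h2 := h1.mul (myErfc_hasDerivAt x)
  have h3 : HasDerivAt (fun x : ℝ => 2 * x / Real.sqrt Real.pi)
      (2 / Real.sqrt Real.pi) x := by
    have := ((hasDerivAt_id x).const_mul 2).div_const (Real.sqrt Real.pi)
    simpa [mul_comm] using this
  have h4 := (h2.sub_const 1).add h3
  refine h4.congr_deriv ?_
  have hid : Real.exp (x ^ 2) * Real.exp (-x ^ 2) = 1 := by
    rw [← Real.exp_add]; simp
  have hπ : Real.sqrt Real.pi ≠ 0 := by positivity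
  field_simp
  nlinarith [hid]

lemma Nf_eq (d : ℝ) : Nf d = ∫ u in (0:ℝ)..d, 2 * u * Real.exp (u ^ 2) * myErfc u := by
  have hcont : Continuous fun u : ℝ => 2 * u * Real.exp (u ^ 2) * myErfc u := by
    apply Continuous.mul _ myErfc_continuous
    exact (continuous_const.mul continuous_id).mul (Real.continuous_exp.comp (by continuity))
  have := intervalIntegral.integral_eq_sub_of_hasDerivAt
    (f := Nf) (a := 0) (b := d) (fun u _ => Nf_hasDerivAt u)
    (hcont.intervalIntegrable _ _)
  rw [this]
  have h0 : Nf 0 = 0 := by simp [Nf, myErfc_zero]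
  rw [h0, sub_zero]

lemma Nf_tendsto : Tendsto (fun x => Nf x / x ^ 2) (nhdsWithin 0 (Ioi 0)) (nhds 1) := by
  have hcont : Continuous fun u : ℝ => 2 * u * Real.exp (u ^ 2) * myErfc u := by
    apply Continuous.mul _ myErfc_continuous
    exact (continuous_const.mul continuous_id).mul (Real.continuous_exp.comp (by continuity))
  have hlow : Tendsto (fun x : ℝ => myErfc x) (nhdsWithin 0 (Ioi 0)) (nhds 1) := by
    have := myErfc_continuous.continuousAt (x := 0)
    rw [ContinuousAt, myErfc_zero] at this
    exact this.mono_left nhdsWithin_le_nhds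
  have hup : Tendsto (fun x : ℝ => Real.exp (x ^ 2)) (nhdsWithin 0 (Ioi 0)) (nhds 1) := by
    have h : ContinuousAt (fun x : ℝ => Real.exp (x ^ 2)) 0 := by
      apply Real.continuous_exp.continuousAt.comp
      exact (continuous_pow 2).continuousAt
    rw [ContinuousAt] at h
    norm_num at h
    exact h.mono_left nhdsWithin_le_nhds
  apply tendsto_of_tendsto_of_tendsto_of_le_of_le' hlow hup
  · filter_upwards [self_mem_nhdsWithin] with x hx
    have hx0 : (0:ℝ) < x := hx
    have key : myErfc x * x ^ 2 ≤ Nf x := by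
      rw [Nf_eq]
      have h1 : ∫ u in (0:ℝ)..x, myErfc x * (2 * u) = myErfc x * x ^ 2 := by
        rw [intervalIntegral.integral_const_mul]
        have : ∫ u in (0:ℝ)..x, 2 * u = x ^ 2 := by
          rw [intervalIntegral.integral_const_mul, integral_id]
          ring
        rw [this]
      rw [← h1]
      apply intervalIntegral.integral_mono_on hx0.le
        ((continuous_const.mul (continuous_const.mul continuous_id)).intervalIntegrable _ _)
        (hcont.intervalIntegrable _ _)
      intro u hu
      have hu0 : 0 ≤ u := hu.1
      have hA : (0:ℝ) ≤ 2 * u := by linarith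
      have h2 : myErfc x ≤ myErfc u := myErfc_antitone hu.2
      have h3 : (1:ℝ) ≤ Real.exp (u ^ 2) := by
        rw [← Real.exp_zero]
        exact Real.exp_le_exp.2 (by positivity)
      have e1 : myErfc x * (2 * u) ≤ myErfc u * (2 * u) :=
        mul_le_mul_of_nonneg_right h2 hA
      have e2 : 1 * (myErfc u * (2 * u)) ≤ Real.exp (u ^ 2) * (myErfc u * (2 * u)) :=
        mul_le_mul_of_nonneg_right h3 (mul_nonneg (myErfc_nonneg u) hA)
      rw [one_mul] at e2
      calc myErfc x * (2 * u) ≤ myErfc u * (2 * u) := e1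
        _ ≤ Real.exp (u ^ 2) * (myErfc u * (2 * u)) := e2
        _ = 2 * u * Real.exp (u ^ 2) * myErfc u := by ring
    calc myErfc x = myErfc x * x ^ 2 / x ^ 2 := by field_simp
      _ ≤ Nf x / x ^ 2 := (div_le_div_iff_of_pos_right (by positivity)).2 key
  · filter_upwards [self_mem_nhdsWithin] with x hx
    have hx0 : (0:ℝ) < x := hx
    have key : Nf x ≤ Real.exp (x ^ 2) * x ^ 2 := by
      rw [Nf_eq]
      have h1 : ∫ u in (0:ℝ)..x, Real.exp (x ^ 2) * (2 * u) = Real.exp (x ^ 2) * x ^ 2 := by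
        rw [intervalIntegral.integral_const_mul]
        have : ∫ u in (0:ℝ)..x, 2 * u = x ^ 2 := by
          rw [intervalIntegral.integral_const_mul, integral_id]
          ring
        rw [this]
      rw [← h1]
      apply intervalIntegral.integral_mono_on hx0.le (hcont.intervalIntegrable _ _)
        ((continuous_const.mul (continuous_const.mul continuous_id)).intervalIntegrable _ _)
      intro u hu
      have hu0 : 0 ≤ u := hu.1
      have hA : (0:ℝ) ≤ 2 * u := by linarith
      have h2 : myErfc u ≤ 1 := myErfc_le_one hu0
      have h3 : Real.exp (u ^ 2) ≤ Real.exp (x ^ 2) := Real.exp_le_exp.2 (by nlinarith [hu.2])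
      have e1 : 2 * u * Real.exp (u ^ 2) * myErfc u ≤ 2 * u * Real.exp (u ^ 2) * 1 :=
        mul_le_mul_of_nonneg_left h2 (mul_nonneg hA (Real.exp_pos _).le)
      rw [mul_one] at e1
      have e2 : 2 * u * Real.exp (u ^ 2) ≤ 2 * u * Real.exp (x ^ 2) :=
        mul_le_mul_of_nonneg_left h3 hA
      calc 2 * u * Real.exp (u ^ 2) * myErfc u ≤ 2 * u * Real.exp (u ^ 2) := e1
        _ ≤ 2 * u * Real.exp (x ^ 2) := e2
        _ = Real.exp (x ^ 2) * (2 * u) := by ring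
    calc Nf x / x ^ 2 ≤ Real.exp (x ^ 2) * x ^ 2 / x ^ 2 :=
        (div_le_div_iff_of_pos_right (by positivity)).2 key
      _ = Real.exp (x ^ 2) := by field_simp

/-- The total heat transmitted through a flat interface of finite resistance `λ` is linear
in `t` to leading order: `lim_{t→0⁺} (1/t) ∫_{s<0} ∫_{s₁>0} G₋₊(s,s₁,t) ds₁ ds = λ`. -/
theorem transmitted_heat_finite_lambda_linear_law
    (Dp Dm lam α : ℝ) (hDp : 0 < Dp) (hDm : 0 < Dm) (hlam : 0 < lam)
    (hα : α = 1 / Real.sqrt Dm + 1 / Real.sqrt Dp)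
    (Erfc : ℝ → ℝ)
    (hErfc : ∀ x, Erfc x = (2 / Real.sqrt Real.pi) * ∫ u in Set.Ioi x, Real.exp (-u ^ 2))
    (Gmp : ℝ → ℝ → ℝ → ℝ)
    (hGmp : ∀ s s₁ t, Gmp s s₁ t = (lam / Real.sqrt (Dm * Dp)) *
        Real.exp ((lam * α / Real.sqrt Dm) * (-s + s₁ * Real.sqrt (Dm / Dp)) +
          lam ^ 2 * α ^ 2 * t) *
          Erfc ((-s + s₁ * Real.sqrt (Dm / Dp)) / (2 * Real.sqrt (Dm * t)) +
            lam * α * Real.sqrt t)) :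
    Tendsto (fun t : ℝ =>
        (1 / t) * ∫ s in Set.Iio (0 : ℝ), ∫ s₁ in Set.Ioi (0 : ℝ), Gmp s s₁ t)
      (nhdsWithin 0 (Set.Ioi 0)) (nhds lam) := by
  have hE : Erfc = myErfc := funext fun x => (hErfc x).trans rfl
  have hsm : 0 < Real.sqrt Dm := Real.sqrt_pos.2 hDm
  have hsp : 0 < Real.sqrt Dp := Real.sqrt_pos.2 hDp
  have hπ : 0 < Real.sqrt Real.pi := Real.sqrt_pos.2 Real.pi_pos
  have hαpos : 0 < α := by rw [hα]; positivity
  set sm := Real.sqrt Dm with hsm'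
  set sp := Real.sqrt Dp with hsp'
  have hmain : ∀ t ∈ Ioi (0:ℝ),
      (1 / t) * ∫ s in Iio (0 : ℝ), ∫ s₁ in Ioi (0 : ℝ), Gmp s s₁ t
        = lam * (Nf (lam * α * Real.sqrt t) / (lam * α * Real.sqrt t) ^ 2) := by
    intro t ht
    have ht0 : (0:ℝ) < t := ht
    set st := Real.sqrt t with hst'
    have hst : 0 < st := Real.sqrt_pos.2 ht0
    have ht2 : st ^ 2 = t := Real.sq_sqrt ht0.le
    have hd : 0 < lam * α * st := by positivity
    have hB : 0 < 2 * (sm * st) := by positivity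
    set g : ℝ → ℝ := fun y => lam / (sm * sp) *
      Real.exp (lam * α / sm * y + lam ^ 2 * α ^ 2 * t) *
      myErfc (y / (2 * (sm * st)) + lam * α * st) with hg'
    set h2 : ℝ → ℝ := fun z => lam / (sm * sp) *
      Real.exp (lam ^ 2 * α ^ 2 * t - 2 * (lam * α * st) ^ 2 + 2 * (lam * α * st) * z) *
      myErfc z with hh2'
    set P : ℝ → ℝ := fun m' => (2 * (lam * α * st))⁻¹ *
      (Real.exp ((lam * α * st) ^ 2) * myErfc (m' - lam * α * st) -
        Real.exp (2 * (lam * α * st) * m') * myErfc m') with hP'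
    -- inner integral
    have hinner : ∀ s : ℝ, s < 0 → (∫ s₁ in Ioi (0:ℝ), Gmp s s₁ t)
        = (sm / sp)⁻¹ * ((2 * (sm * st)) *
          (lam / (sm * sp) * Real.exp (lam ^ 2 * α ^ 2 * t - 2 * (lam * α * st) ^ 2) *
            P ((2 * (sm * st))⁻¹ * -s + lam * α * st))) := by
      intro s hs
      have step0 : (fun s₁ => Gmp s s₁ t) = fun s₁ => g (sm / sp * s₁ + -s) := by
        funext s₁
        rw [hGmp, hE]
        have e1 : Real.sqrt (Dm * Dp) = sm * sp := Real.sqrt_mul hDm.le Dp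
        have e2 : Real.sqrt (Dm / Dp) = sm / sp := Real.sqrt_div hDm.le Dp
        have e3 : Real.sqrt (Dm * t) = sm * st := Real.sqrt_mul hDm.le t
        rw [e1, e2, e3, hg']
        have ea : lam * α / sm * (-s + s₁ * (sm / sp)) + lam ^ 2 * α ^ 2 * t
            = lam * α / sm * (sm / sp * s₁ + -s) + lam ^ 2 * α ^ 2 * t := by ring
        have eb : (-s + s₁ * (sm / sp)) / (2 * (sm * st)) + lam * α * st
            = (sm / sp * s₁ + -s) / (2 * (sm * st)) + lam * α * st := by ring
        rw [ea, eb]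
      rw [step0, integral_comp_affine_Ioi g (by positivity : (0:ℝ) < sm / sp) (-s) 0,
        mul_zero, zero_add]
      have step1 : ∀ y : ℝ, g y = h2 ((2 * (sm * st))⁻¹ * y + lam * α * st) := by
        intro y
        rw [hg', hh2']
        simp only
        congr 2 <;> (field_simp; try ring)
      have step2 : ∫ y in Ioi (-s), g y
          = (2 * (sm * st)) * ∫ z in Ioi ((2 * (sm * st))⁻¹ * -s + lam * α * st), h2 z := by
        rw [show (fun y => g y) = fun y => h2 ((2 * (sm * st))⁻¹ * y + lam * α * st) from
          funext step1]
        rw [integral_comp_affine_Ioi h2 (by positivity : (0:ℝ) < (2 * (sm * st))⁻¹)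
          (lam * α * st) (-s), inv_inv]
      rw [step2]
      congr 1
      have hm0 : 0 ≤ (2 * (sm * st))⁻¹ * -s + lam * α * st := by
        have : 0 < (2 * (sm * st))⁻¹ * -s := by
          apply mul_pos (by positivity)
          linarith
        linarith
      have step3 : ∀ z : ℝ, h2 z
          = (lam / (sm * sp) * Real.exp (lam ^ 2 * α ^ 2 * t - 2 * (lam * α * st) ^ 2)) *
            (Real.exp (2 * (lam * α * st) * z) * myErfc z) := by
        intro z
        rw [hh2']
        simp only
        rw [Real.exp_add]
        ring
      rw [show (fun z => h2 z) = _ from funext step3, integral_const_mul,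
        Qlem hd hm0, hP']
    -- outer integral
    have houter : (∫ s in Iio (0 : ℝ), ∫ s₁ in Ioi (0 : ℝ), Gmp s s₁ t)
        = (sm / sp)⁻¹ * ((2 * (sm * st)) *
          (lam / (sm * sp) * Real.exp (lam ^ 2 * α ^ 2 * t - 2 * (lam * α * st) ^ 2) *
            ((2 * (sm * st)) * ∫ m' in Ioi (lam * α * st), P m'))) := by
      rw [setIntegral_congr_fun measurableSet_Iio
        (fun s (hs : s < 0) => hinner s hs)]
      rw [← integral_Iic_eq_integral_Iio]
      have := integral_comp_neg_Iic (0:ℝ) (fun w => (sm / sp)⁻¹ * ((2 * (sm * st)) *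
          (lam / (sm * sp) * Real.exp (lam ^ 2 * α ^ 2 * t - 2 * (lam * α * st) ^ 2) *
            P ((2 * (sm * st))⁻¹ * w + lam * α * st))))
      rw [neg_zero] at this
      rw [this, integral_const_mul, integral_const_mul, integral_const_mul]
      congr 2
      rw [integral_comp_affine_Ioi P (by positivity : (0:ℝ) < (2 * (sm * st))⁻¹)
        (lam * α * st) 0, inv_inv, mul_zero, zero_add]
    -- compute ∫ P
    have hint1 : IntegrableOn (fun m' => myErfc (m' - lam * α * st))
        (Ioi (lam * α * st)) := by
      have hc : Continuous fun m' : ℝ => myErfc (m' - lam * α * st) :=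
        myErfc_continuous.comp (by continuity)
      apply ((gauss_shift_integrable (-(lam * α * st))).integrableOn).mono'
        hc.aestronglyMeasurable
      rw [ae_restrict_iff' measurableSet_Ioi]
      apply Eventually.of_forall
      intro z hz
      have hz0 : 0 ≤ z - lam * α * st := by
        have := mem_Ioi.1 hz; linarith
      rw [Real.norm_eq_abs, abs_of_nonneg (myErfc_nonneg _)]
      have hle := myErfc_le_gauss hz0
      rw [sub_eq_add_neg] at hle
      exact hle
    have hPint : ∫ m' in Ioi (lam * α * st), P m'
        = (2 * (lam * α * st))⁻¹ *
          (Real.exp ((lam * α * st) ^ 2) * (1 / Real.sqrt Real.pi) -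
            (2 * (lam * α * st))⁻¹ * (Real.exp ((lam * α * st) ^ 2) * 1 -
              Real.exp (2 * (lam * α * st) * (lam * α * st)) * myErfc (lam * α * st))) := by
      rw [hP']
      simp only
      rw [integral_const_mul]
      rw [integral_sub (hint1.const_mul _) (integrableOn_exp_mul_myErfc _ hd.le)]
      rw [integral_const_mul]
      have hshift : ∫ m' in Ioi (lam * α * st), myErfc (m' - lam * α * st)
          = 1 / Real.sqrt Real.pi := by
        simp_rw [sub_eq_add_neg]
        rw [integral_comp_add_right_Ioi myErfc (lam * α * st) (-(lam * α * st)),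
          add_neg_cancel, intErfc]
      rw [hshift, Qlem hd hd.le, sub_self, myErfc_zero]
    -- final algebra
    rw [houter, hPint]
    rw [← ht2]
    have hexp1 : lam ^ 2 * α ^ 2 * st ^ 2 - 2 * (lam * α * st) ^ 2
        = -((lam * α * st) ^ 2) := by ring
    rw [hexp1, Real.exp_neg]
    have hexp2 : Real.exp (2 * (lam * α * st) * (lam * α * st))
        = Real.exp ((lam * α * st) ^ 2) * Real.exp ((lam * α * st) ^ 2) := by
      rw [← Real.exp_add]; ring_nf
    rw [hexp2]
    simp only [Nf]
    have hX : Real.exp ((lam * α * st) ^ 2) ≠ 0 := Real.exp_ne_zero _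
    field_simp
    ring
  -- limit
  have hmap : Tendsto (fun t : ℝ => lam * α * Real.sqrt t)
      (nhdsWithin 0 (Ioi 0)) (nhdsWithin 0 (Ioi 0)) := by
    rw [tendsto_nhdsWithin_iff]
    constructor
    · have h1 : Tendsto (fun t : ℝ => lam * α * Real.sqrt t) (nhds 0)
          (nhds (lam * α * Real.sqrt 0)) :=
        (continuous_const.mul Real.continuous_sqrt).tendsto 0
      simp only [Real.sqrt_zero, mul_zero] at h1
      exact h1.mono_left nhdsWithin_le_nhds
    · filter_upwards [self_mem_nhdsWithin] with t ht
      exact mul_pos (mul_pos hlam hαpos) (Real.sqrt_pos.2 ht)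
  have hlim := (Nf_tendsto.comp hmap).const_mul lam
  rw [mul_one] at hlim
  apply hlim.congr'
  filter_upwards [self_mem_nhdsWithin] with t ht
  exact (hmain t ht).symm
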